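/- Let n ≥ 1 and 0 < d < n, and let Γ ⊆ ℝ^n be a nonempty closed d-Ahlfors regular set with constant 𝒜, with measure σ = ℋ^d restricted to Γ. Let 0 < s ≤ 1 and d/(d+s) < p < 1, and set θ = s + d − d/p (so that 0 < θ < 1). Then there is a constant C, depending only on n, d, s, p, and 𝒜, such that for every z ∈ Γ, every ϱ > 0, and every block a in Δ(z,ϱ): ∫_Γ ∫_Γ |a(x) − a(y)| |x−y|^{−d−θ} dσ(y) dσ(x) ≤ C ϱ^{d/p − d/2 − s}. That is, every block a in Δ(z,ϱ) satisfies ‖a‖_{Λ^{θ,1}(Γ)} ≤ C ϱ^{(d − dp/2 − sp)/p}. -/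

import Mathlib

open MeasureTheory Metric Set ENNReal

noncomputable section

abbrev Eucl (n : ℕ) := EuclideanSpace ℝ (Fin n)

variable {n : ℕ}

/-- The `d`-dimensional surface measure on `Γ`: Hausdorff measure `ℋ^d` restricted to `Γ`. -/
def sMeasure (d : ℝ) (Γ : Set (Eucl n)) : Measure (Eucl n) := (μH[d]).restrict Γ

/-- `Γ` is `d`-Ahlfors regular with constant `𝒜`, for radii `r` with `ofReal r < R`. -/
def AhlforsRegularWithin (d 𝒜 : ℝ) (Γ : Set (Eucl n)) (R : ℝ≥0∞) : Prop :=
  ∀ x ∈ Γ, ∀ r : ℝ, 0 < r → ENNReal.ofReal r < R →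
    ENNReal.ofReal (𝒜⁻¹ * r ^ d) ≤ sMeasure d Γ (ball x r) ∧
      sMeasure d Γ (ball x r) ≤ ENNReal.ofReal (𝒜 * r ^ d)

/-- A block in `Δ(z,ϱ) = Γ ∩ B(z,ϱ)`. -/
def IsBlock (Γ : Set (Eucl n)) (d : ℝ) (z : Eucl n) (ϱ : ℝ) (a : Eucl n → ℝ) : Prop :=
  (∀ x, x ∉ Γ ∩ ball z ϱ → a x = 0) ∧
  (∀ x ∈ Γ, |a x| ≤ ϱ ^ (-(d / 2))) ∧
  (∀ x ∈ Γ, ∀ y ∈ Γ, |a x - a y| ≤ dist x y * ϱ ^ (-(d / 2) - 1))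

/-- The `p`-th power of the Slobodeckij seminorm (double integral). -/
def sloboInt (d s p : ℝ) (σ : Measure (Eucl n)) (f : Eucl n → ℝ) : ℝ≥0∞ :=
  ∫⁻ x, ∫⁻ y, ENNReal.ofReal (|f x - f y| ^ p / dist x y ^ (d + p * s)) ∂σ ∂σ


/- ============ auxiliary lemmas ============ -/

lemma geom_ofReal_tsum (A q : ℝ) (hq0 : 0 ≤ q) (hq1 : q < 1) (hA : 0 ≤ A) :
    ∑' k : ℕ, ENNReal.ofReal (A * q ^ k) = ENNReal.ofReal (A / (1 - q)) := by
  rw [← ENNReal.ofReal_tsum_of_nonneg (fun k => by positivity)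
    ((summable_geometric_of_lt_one hq0 hq1).mul_left A)]
  rw [tsum_mul_left, tsum_geometric_of_lt_one hq0 hq1]
  rw [div_eq_mul_inv]

lemma dyadic_bound {X : Type*} [MeasurableSpace X] (μ : Measure X)
    (s : ℕ → Set X) (hmeas : ∀ k, MeasurableSet (s k)) (c : ℕ → ℝ)
    (B : ℕ → ℝ≥0∞) (hB : ∀ k, μ (s k) ≤ B k)
    (A q : ℝ) (hq0 : 0 ≤ q) (hq1 : q < 1) (hA : 0 ≤ A)
    (hbound : ∀ k, ENNReal.ofReal (c k) * B k ≤ ENNReal.ofReal (A * q ^ k)) :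
    ∫⁻ y, ∑' k, (s k).indicator (fun _ => ENNReal.ofReal (c k)) y ∂μ
      ≤ ENNReal.ofReal (A / (1 - q)) := by
  rw [lintegral_tsum (fun k => (measurable_const.indicator (hmeas k)).aemeasurable)]
  calc ∑' k, ∫⁻ y, (s k).indicator (fun _ => ENNReal.ofReal (c k)) y ∂μ
      ≤ ∑' k, ENNReal.ofReal (A * q ^ k) := by
        refine ENNReal.tsum_le_tsum (fun k => ?_)
        rw [lintegral_indicator_const (hmeas k)]
        exact le_trans (mul_le_mul_right (hB k) _) (hbound k)
    _ = _ := geom_ofReal_tsum A q hq0 hq1 hA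

lemma dyadic_cover {T r : ℝ} (hT : 0 < T) (hr : T ≤ r) :
    ∃ k : ℕ, T * 2 ^ k ≤ r ∧ r < T * 2 ^ (k + 1) := by
  obtain ⟨m, hm1, hm2⟩ := exists_mem_Ico_zpow (x := r / T) (y := 2)
    (div_pos (lt_of_lt_of_le hT hr) hT) one_lt_two
  have h1 : (1 : ℝ) ≤ r / T := (one_le_div hT).2 hr
  have hm0 : 0 ≤ m := by
    by_contra h
    push_neg at h
    have h2 : ((2:ℝ)) ^ (m + 1) ≤ (2:ℝ) ^ (0 : ℤ) :=
      zpow_le_zpow_right₀ (by norm_num) (by omega)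
    simp only [zpow_zero] at h2
    exact absurd hm2 (not_lt.2 (le_trans (le_trans h2 h1) (le_of_eq rfl)))
  have h2 : ((2:ℝ)) ^ (m.toNat) = (2:ℝ) ^ m := by
    rw [← zpow_natCast, Int.toNat_of_nonneg hm0]
  have h3 : ((2:ℝ)) ^ (m.toNat + 1) = (2:ℝ) ^ (m + 1) := by
    rw [← zpow_natCast]
    congr 1
    omega
  refine ⟨m.toNat, ?_, ?_⟩
  · rw [h2, mul_comm, ← le_div_iff₀ hT]
    exact hm1
  · rw [h3, mul_comm, ← div_lt_iff₀ hT] at *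
    exact hm2

lemma uniform_ball_bound (n : ℕ) (d 𝒜 : ℝ) (hd0 : 0 < d) (h𝒜 : 1 ≤ 𝒜) :
    ∃ K1 : ℝ, 1 ≤ K1 ∧ ∀ Γ : Set (Eucl n), Γ.Nonempty →
      AhlforsRegularWithin d 𝒜 Γ (EMetric.diam Γ) →
      ∀ w ∈ Γ, ∀ r : ℝ, 0 < r → sMeasure d Γ (ball w r) ≤ ENNReal.ofReal (K1 * r ^ d) := by
  obtain ⟨t, ht⟩ := (isCompact_closedBall (0 : Eucl n) 1).elim_finite_subcover
    (fun c : Eucl n => ball c (4⁻¹)) (fun _ => isOpen_ball)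
    (fun y hy => mem_iUnion.2 ⟨y, mem_ball_self (by norm_num)⟩)
  refine ⟨((t.card : ℝ) + 1) * 𝒜, by nlinarith [Nat.cast_nonneg (α := ℝ) t.card], ?_⟩
  intro Γ hne hreg w hw r hr
  have hrd : (0:ℝ) ≤ r ^ d := Real.rpow_nonneg hr.le d
  by_cases hrD : ENNReal.ofReal r < EMetric.diam Γ
  · refine le_trans (hreg w hw r hr hrD).2 (ENNReal.ofReal_le_ofReal ?_)
    nlinarith [mul_nonneg (Nat.cast_nonneg (α := ℝ) t.card)
      (mul_nonneg (by linarith : (0:ℝ) ≤ 𝒜) hrd)]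
  · push_neg at hrD
    have hfin : EMetric.diam Γ ≠ ⊤ := ne_top_of_le_ne_top ENNReal.ofReal_ne_top hrD
    set Dr := (EMetric.diam Γ).toReal with hDrdef
    have hDr_r : Dr ≤ r := by
      have h := ENNReal.toReal_mono ENNReal.ofReal_ne_top hrD
      rwa [ENNReal.toReal_ofReal hr.le] at h
    have hΓtot : sMeasure d Γ (ball w r) ≤ μH[d] Γ := by
      rw [sMeasure, Measure.restrict_apply measurableSet_ball]
      exact measure_mono inter_subset_right
    rcases eq_or_lt_of_le (ENNReal.toReal_nonneg : (0:ℝ) ≤ Dr) with h0 | h0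
    · have hD0 : EMetric.diam Γ = 0 := by
        rcases ENNReal.toReal_eq_zero_iff _ |>.1 h0.symm with h | h
        · exact h
        · exact absurd h hfin
      have hsub := EMetric.diam_eq_zero_iff.1 hD0
      have hμ0 : μH[d] Γ = 0 := by
        have hd' : d = ((d.toNNReal : ℝ)) := (Real.coe_toNNReal d hd0.le).symm
        rw [hd']
        refine hausdorffMeasure_of_dimH_lt ?_
        rw [dimH_subsingleton hsub]
        exact_mod_cast ENNReal.coe_pos.2 (Real.toNNReal_pos.2 hd0)
      refine le_trans hΓtot ?_
      rw [hμ0]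
      exact zero_le
    · have hcov : Γ ⊆ ⋃ c ∈ t, ball (w + Dr • c) (Dr/4) := by
        intro y hy
        have hdy : dist y w ≤ Dr := by
          have h := EMetric.edist_le_diam_of_mem hy hw
          have h2 := ENNReal.toReal_mono hfin h
          rwa [← dist_edist] at h2
        have hc0 : Dr⁻¹ • (y - w) ∈ closedBall (0:Eucl n) 1 := by
          rw [mem_closedBall, dist_zero_right, norm_smul, Real.norm_eq_abs,
            abs_of_pos (inv_pos.2 h0)]
          have hyw : ‖y - w‖ ≤ Dr := by rw [← dist_eq_norm]; exact hdy
          calc Dr⁻¹ * ‖y - w‖ ≤ Dr⁻¹ * Dr := by gcongr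
            _ = 1 := inv_mul_cancel₀ h0.ne'
        obtain ⟨c, hc_t, hc_ball⟩ := mem_iUnion₂.1 (ht hc0)
        refine mem_iUnion₂.2 ⟨c, hc_t, ?_⟩
        rw [mem_ball, dist_eq_norm]
        have hkey : y - (w + Dr • c) = Dr • (Dr⁻¹ • (y - w) - c) := by
          rw [smul_sub, smul_smul, mul_inv_cancel₀ h0.ne', one_smul]
          abel
        rw [hkey, norm_smul, Real.norm_eq_abs, abs_of_pos h0]
        have hlt : ‖Dr⁻¹ • (y - w) - c‖ < 4⁻¹ := by
          rw [← dist_eq_norm]; exact mem_ball.1 hc_ball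
        calc Dr * ‖Dr⁻¹ • (y - w) - c‖ < Dr * 4⁻¹ := by gcongr
          _ ≤ Dr / 4 := by ring_nf; exact le_rfl
      have hsum : μH[d] Γ ≤ ∑ c ∈ t, sMeasure d Γ (ball (w + Dr • c) (Dr/4)) := by
        have h1 : μH[d] Γ = sMeasure d Γ (⋃ c ∈ t, ball (w + Dr • c) (Dr/4)) := by
          have hU : MeasurableSet (⋃ c ∈ t, ball (w + Dr • c) (Dr/4)) :=
            t.measurableSet_biUnion (fun c _ => measurableSet_ball)
          rw [sMeasure, Measure.restrict_apply hU, inter_eq_self_of_subset_right hcov]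
        rw [h1]
        exact measure_biUnion_finset_le t _
      have heach : ∀ c ∈ t, sMeasure d Γ (ball (w + Dr • c) (Dr/4))
          ≤ ENNReal.ofReal (𝒜 * Dr ^ d) := by
        intro c hc
        by_cases hint : (ball (w + Dr • c) (Dr/4) ∩ Γ).Nonempty
        · obtain ⟨w', hw'b, hw'Γ⟩ := hint
          have hsub2 : ball (w + Dr • c) (Dr/4) ⊆ ball w' (Dr/2) := by
            intro u hu
            rw [mem_ball] at hu ⊢
            calc dist u w' ≤ dist u (w + Dr • c) + dist (w + Dr • c) w' := dist_triangle _ _ _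
              _ < Dr/4 + Dr/4 := add_lt_add hu (by rw [dist_comm]; exact hw'b)
              _ = Dr/2 := by ring
          have hhalf : ENNReal.ofReal (Dr/2) < EMetric.diam Γ := by
            rw [ENNReal.ofReal_lt_iff_lt_toReal (by positivity) hfin]
            rw [← hDrdef]
            linarith
          calc sMeasure d Γ (ball (w + Dr • c) (Dr/4)) ≤ sMeasure d Γ (ball w' (Dr/2)) :=
                measure_mono hsub2
            _ ≤ ENNReal.ofReal (𝒜 * (Dr/2) ^ d) := (hreg w' hw'Γ (Dr/2) (by linarith) hhalf).2
            _ ≤ ENNReal.ofReal (𝒜 * Dr ^ d) := by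
                refine ENNReal.ofReal_le_ofReal ?_
                have h2 : (Dr/2) ^ d ≤ Dr ^ d :=
                  Real.rpow_le_rpow (by linarith) (by linarith) hd0.le
                exact mul_le_mul_of_nonneg_left h2 (by linarith)
        · have hemp : ball (w + Dr • c) (Dr/4) ∩ Γ = ∅ := not_nonempty_iff_eq_empty.1 hint
          rw [sMeasure, Measure.restrict_apply measurableSet_ball, hemp]
          simp
      calc sMeasure d Γ (ball w r) ≤ μH[d] Γ := hΓtot
        _ ≤ ∑ c ∈ t, sMeasure d Γ (ball (w + Dr • c) (Dr/4)) := hsum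
        _ ≤ t.card • ENNReal.ofReal (𝒜 * Dr ^ d) := Finset.sum_le_card_nsmul t _ _ heach
        _ = ENNReal.ofReal ((t.card : ℝ) * (𝒜 * Dr ^ d)) := by
            rw [ENNReal.ofReal_mul (Nat.cast_nonneg _), ENNReal.ofReal_natCast, nsmul_eq_mul]
        _ ≤ ENNReal.ofReal (((t.card : ℝ) + 1) * 𝒜 * r ^ d) := by
            refine ENNReal.ofReal_le_ofReal ?_
            have h2 := Real.rpow_le_rpow h0.le hDr_r hd0.le
            have h3 : (0:ℝ) ≤ Dr ^ d := Real.rpow_nonneg h0.le d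
            calc (t.card : ℝ) * (𝒜 * Dr ^ d) ≤ (t.card : ℝ) * (𝒜 * r ^ d) := by
                  refine mul_le_mul_of_nonneg_left ?_ (Nat.cast_nonneg _)
                  exact mul_le_mul_of_nonneg_left h2 (by linarith)
              _ ≤ ((t.card : ℝ) + 1) * 𝒜 * r ^ d := by
                  rw [mul_assoc]
                  refine mul_le_mul_of_nonneg_right ?_ (mul_nonneg (by linarith) hrd)
                  linarith

/- ============ main theorem ============ -/

set_option maxHeartbeats 1000000 in
/-- every block `a` in `Δ(z,ϱ)` on a `d`-Ahlfors regular set `Γ` satisfies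
`‖a‖_{Λ^{θ,1}(Γ)} ≤ C ϱ^{d/p - d/2 - s}`, where `θ = s + d - d/p`. -/
theorem statement8
    (n : ℕ) (hn : 1 ≤ n) (d s p 𝒜 : ℝ) (hd0 : 0 < d) (hdn : d < n)
    (hs0 : 0 < s) (hs1 : s ≤ 1) (hp0 : d / (d + s) < p) (hp1 : p < 1) (h𝒜 : 1 ≤ 𝒜) :
    ∃ C > (0:ℝ), ∀ Γ : Set (Eucl n), IsClosed Γ → Γ.Nonempty →
      AhlforsRegularWithin d 𝒜 Γ (EMetric.diam Γ) →
      ∀ z ∈ Γ, ∀ ϱ : ℝ, 0 < ϱ → ∀ a : Eucl n → ℝ, IsBlock Γ d z ϱ a →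
        sloboInt d (s + d - d / p) 1 (sMeasure d Γ) a ≤
          ENNReal.ofReal (C * ϱ ^ (d / p - d / 2 - s)) := by
  obtain ⟨K1, hK1, hUB⟩ := uniform_ball_bound n d 𝒜 hd0 h𝒜
  have hK1' : (0:ℝ) < K1 := by linarith
  set θ := s + d - d / p with hθdef
  have hds : 0 < d + s := by linarith
  have hp : 0 < p := lt_trans (div_pos hd0 hds) hp0
  have hθ0 : 0 < θ := by
    have h1 : d < p * (d + s) := by
      have h := (div_lt_iff₀ hds).1 hp0
      nlinarith
    have h2 : d / p < d + s := (div_lt_iff₀ hp).2 (by nlinarith)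
    rw [hθdef]; linarith
  have hθ1 : θ < 1 := by
    have h1 : d < d / p := by
      rw [lt_div_iff₀ hp]; nlinarith
    rw [hθdef]; linarith
  have hdθ : 0 < d + θ := by linarith
  have h2pos : (0:ℝ) < 2 := two_pos
  set q1 : ℝ := (2:ℝ) ^ (θ - 1) with hq1def
  set q2 : ℝ := (2:ℝ) ^ (-θ) with hq2def
  have hq1pos : 0 < q1 := Real.rpow_pos_of_pos h2pos _
  have hq1lt : q1 < 1 := Real.rpow_lt_one_of_one_lt_of_neg one_lt_two (by linarith)
  have hq2pos : 0 < q2 := Real.rpow_pos_of_pos h2pos _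
  have hq2lt : q2 < 1 := Real.rpow_lt_one_of_one_lt_of_neg one_lt_two (by linarith)
  set C1 : ℝ := K1 * (2:ℝ)^(2*d+θ) / (1 - q1) + 2 * K1 * (2:ℝ)^d / (1 - q2) with hC1def
  have hC1pos : 0 < C1 := by
    have := Real.rpow_pos_of_pos h2pos (2*d+θ)
    have := Real.rpow_pos_of_pos h2pos d
    have h1q1 : 0 < 1 - q1 := by linarith
    have h1q2 : 0 < 1 - q2 := by linarith
    have t1 : 0 < K1 * (2:ℝ)^(2*d+θ) / (1 - q1) := by positivity
    have t2 : 0 < 2 * K1 * (2:ℝ)^d / (1 - q2) := by positivity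
    rw [hC1def]; linarith
  set Cf : ℝ := C1 * K1 * (2:ℝ)^d + K1^2 * (2:ℝ)^(2*d) / (1 - q2) with hCfdef
  have hCfpos : 0 < Cf := by
    have h1 : (0:ℝ) < (2:ℝ)^d := Real.rpow_pos_of_pos h2pos d
    have h2 : (0:ℝ) < (2:ℝ)^(2*d) := Real.rpow_pos_of_pos h2pos (2*d)
    have h1q2 : 0 < 1 - q2 := by linarith
    have t1 : 0 < C1 * K1 * (2:ℝ)^d := by positivity
    have t2 : 0 < K1^2 * (2:ℝ)^(2*d) / (1 - q2) := by positivity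
    rw [hCfdef]; linarith
  refine ⟨Cf, hCfpos, ?_⟩
  intro Γ hclosed hne hreg z hz ϱ hϱ a ha
  have hUBΓ := hUB Γ hne hreg
  obtain ⟨ha1, ha2, ha3⟩ := ha
  have hΓm : MeasurableSet Γ := hclosed.measurableSet
  set σ := sMeasure d Γ with hσdef
  have hσres : σ = (μH[d]).restrict Γ := rfl
  have hzero : ∀ x y : Eucl n, a x = a y →
      ENNReal.ofReal (|a x - a y| / dist x y ^ (d + θ)) = 0 := by
    intro x y h
    rw [h, sub_self, abs_zero, zero_div, ENNReal.ofReal_zero]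
  -- exponent rewriting of the goal
  have hexp : d / p - d / 2 - s = d/2 - θ := by rw [hθdef]; ring
  rw [hexp]
  have hgoal_eq : sloboInt d θ 1 σ a =
      ∫⁻ x, ∫⁻ y, ENNReal.ofReal (|a x - a y| / dist x y ^ (d + θ)) ∂σ ∂σ := by
    rw [sloboInt]
    simp only [Real.rpow_one, one_mul]
  rw [hgoal_eq]
  -- conversions between rpow-radii and nat-pow radii
  have hconv1 : ∀ k:ℕ, ϱ * (2:ℝ)^(-(k:ℝ)) = ϱ / 2^k := by
    intro k
    rw [Real.rpow_neg h2pos.le, Real.rpow_natCast, div_eq_mul_inv]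
  have hconv2 : ∀ k:ℕ, ϱ * (2:ℝ)^(-(k:ℝ)-1) = ϱ / 2^(k+1) := by
    intro k
    rw [show -(k:ℝ)-1 = -(((k+1:ℕ)):ℝ) by push_cast; ring,
      Real.rpow_neg h2pos.le, Real.rpow_natCast, div_eq_mul_inv]
  have hconv3 : ∀ k:ℕ, ϱ * (2:ℝ)^((k:ℝ)) = ϱ * 2^k := by
    intro k; rw [Real.rpow_natCast]
  have hconv4 : ∀ k:ℕ, ϱ * (2:ℝ)^((k:ℝ)+1) = ϱ * 2^(k+1) := by
    intro k
    rw [show (k:ℝ)+1 = (((k+1:ℕ)):ℝ) by push_cast; ring, Real.rpow_natCast]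
  have hconv5 : ∀ k:ℕ, ϱ * (2:ℝ)^((k:ℝ)+1) = 2*ϱ * 2^k := by
    intro k
    rw [Real.rpow_add h2pos, Real.rpow_one, Real.rpow_natCast]; ring
  have hconv6 : ∀ k:ℕ, ϱ * (2:ℝ)^((k:ℝ)+2) = 2*ϱ * 2^(k+1) := by
    intro k
    rw [show (k:ℝ)+2 = (((k+1:ℕ)):ℝ)+1 by push_cast; ring,
      Real.rpow_add h2pos, Real.rpow_one, Real.rpow_natCast]; ring
  have hrpos : ∀ (e : ℝ), 0 < ϱ * (2:ℝ)^e := fun e => by positivity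
  -- INNER ESTIMATE
  have key_inner : ∀ x ∈ Γ,
      ∫⁻ y, ENNReal.ofReal (|a x - a y| / dist x y ^ (d + θ)) ∂σ
        ≤ ENNReal.ofReal (C1 * ϱ ^ (-(d/2) - θ)) := by
    intro x hx
    set sN : ℕ → Set (Eucl n) := fun k =>
      closedBall x (ϱ * (2:ℝ)^(-(k:ℝ))) \ closedBall x (ϱ * (2:ℝ)^(-(k:ℝ)-1)) with hsNdef
    set sF : ℕ → Set (Eucl n) := fun k =>
      ball x (ϱ * (2:ℝ)^((k:ℝ)+1)) \ ball x (ϱ * (2:ℝ)^((k:ℝ))) with hsFdef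
    set cN : ℕ → ℝ := fun k =>
      ϱ^(-(d/2)-1) * (ϱ * (2:ℝ)^(-(k:ℝ))) / (ϱ * (2:ℝ)^(-(k:ℝ)-1))^(d+θ) with hcNdef
    set cF : ℕ → ℝ := fun k => 2 * ϱ^(-(d/2)) / (ϱ * (2:ℝ)^((k:ℝ)))^(d+θ) with hcFdef
    have hcNpos : ∀ k, 0 ≤ cN k := fun k => by
      simp only [hcNdef]
      have := hrpos (-(k:ℝ)); have := hrpos (-(k:ℝ)-1); positivity
    have hcFpos : ∀ k, 0 ≤ cF k := fun k => by
      simp only [hcFdef]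
      have := hrpos ((k:ℝ)); positivity
    set G1 : Eucl n → ℝ≥0∞ := fun y =>
      ∑' k, (sN k).indicator (fun _ => ENNReal.ofReal (cN k)) y with hG1def
    set G2 : Eucl n → ℝ≥0∞ := fun y =>
      ∑' k, (sF k).indicator (fun _ => ENNReal.ofReal (cF k)) y with hG2def
    have hmeasN : ∀ k, MeasurableSet (sN k) :=
      fun k => measurableSet_closedBall.diff measurableSet_closedBall
    have hmeasF : ∀ k, MeasurableSet (sF k) :=
      fun k => measurableSet_ball.diff measurableSet_ball
    have hdom : ∀ y ∈ Γ,
        ENNReal.ofReal (|a x - a y| / dist x y ^ (d + θ)) ≤ G1 y + G2 y := by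
      intro y hy
      rcases eq_or_lt_of_le (dist_nonneg : (0:ℝ) ≤ dist x y) with hdist0 | hdpos
      · have hxy : x = y := dist_eq_zero.1 hdist0.symm
        rw [hzero x y (by rw [hxy])]
        exact zero_le
      · by_cases hnear : dist x y ≤ ϱ
        · obtain ⟨k, hk1, hk2⟩ := dyadic_cover hdpos hnear
          have hle : dist x y ≤ ϱ * (2:ℝ)^(-(k:ℝ)) := by
            rw [hconv1, le_div_iff₀ (by positivity)]
            linarith [hk1]
          have hgt : ϱ * (2:ℝ)^(-(k:ℝ)-1) < dist x y := by
            rw [hconv2, div_lt_iff₀ (by positivity)]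
            linarith [hk2]
          have hmem : y ∈ sN k := by
            constructor
            · rw [mem_closedBall, dist_comm]; exact hle
            · rw [mem_closedBall, dist_comm]; exact not_le.2 hgt
          have hval : ENNReal.ofReal (|a x - a y| / dist x y ^ (d + θ))
              ≤ ENNReal.ofReal (cN k) := by
            refine ENNReal.ofReal_le_ofReal ?_
            simp only [hcNdef]
            refine div_le_div₀ ?_ ?_ ?_ ?_
            · have := hrpos (-(k:ℝ))
              positivity
            · calc |a x - a y| ≤ dist x y * ϱ ^ (-(d / 2) - 1) := ha3 x hx y hy
                _ ≤ (ϱ * (2:ℝ)^(-(k:ℝ))) * ϱ ^ (-(d / 2) - 1) := by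
                    refine mul_le_mul_of_nonneg_right hle ?_
                    exact (Real.rpow_pos_of_pos hϱ _).le
                _ = ϱ^(-(d/2)-1) * (ϱ * (2:ℝ)^(-(k:ℝ))) := by ring
            · exact Real.rpow_pos_of_pos (hrpos _) _
            · exact Real.rpow_le_rpow (hrpos _).le hgt.le hdθ.le
          refine le_trans hval (le_trans ?_ le_self_add)
          rw [hG1def]
          exact le_trans
            (le_of_eq (indicator_of_mem hmem (fun _ => ENNReal.ofReal (cN k))).symm)
            (ENNReal.le_tsum k)
        · push_neg at hnear
          obtain ⟨k, hk1, hk2⟩ := dyadic_cover hϱ hnear.le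
          have hge : ϱ * (2:ℝ)^((k:ℝ)) ≤ dist x y := by rw [hconv3]; linarith
          have hlt : dist x y < ϱ * (2:ℝ)^((k:ℝ)+1) := by rw [hconv4]; linarith
          have hmem : y ∈ sF k := by
            constructor
            · rw [mem_ball, dist_comm]; exact hlt
            · rw [mem_ball, dist_comm]; exact not_lt.2 hge
          have hval : ENNReal.ofReal (|a x - a y| / dist x y ^ (d + θ))
              ≤ ENNReal.ofReal (cF k) := by
            refine ENNReal.ofReal_le_ofReal ?_
            simp only [hcFdef]
            refine div_le_div₀ ?_ ?_ ?_ ?_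
            · positivity
            · calc |a x - a y| ≤ |a x| + |a y| := abs_sub _ _
                _ ≤ ϱ ^ (-(d/2)) + ϱ ^ (-(d/2)) := add_le_add (ha2 x hx) (ha2 y hy)
                _ = 2 * ϱ^(-(d/2)) := by ring
            · exact Real.rpow_pos_of_pos (hrpos _) _
            · exact Real.rpow_le_rpow (hrpos _).le hge hdθ.le
          refine le_trans hval (le_trans ?_ le_add_self)
          rw [hG2def]
          exact le_trans
            (le_of_eq (indicator_of_mem hmem (fun _ => ENNReal.ofReal (cF k))).symm)
            (ENNReal.le_tsum k)
    have hG1meas : Measurable G1 :=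
      Measurable.ennreal_tsum (fun k => measurable_const.indicator (hmeasN k))
    have hstep1 : ∫⁻ y, ENNReal.ofReal (|a x - a y| / dist x y ^ (d + θ)) ∂σ
        ≤ ∫⁻ y, (G1 y + G2 y) ∂σ := by
      refine lintegral_mono_ae ?_
      rw [hσres]
      filter_upwards [ae_restrict_mem hΓm] with y hy using hdom y hy
    have hsplit : ∫⁻ y, (G1 y + G2 y) ∂σ = (∫⁻ y, G1 y ∂σ) + ∫⁻ y, G2 y ∂σ :=
      lintegral_add_left hG1meas G2
    have hIG1 : ∫⁻ y, G1 y ∂σ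
        ≤ ENNReal.ofReal ((K1 * (2:ℝ)^(2*d+θ) * ϱ^(-(d/2)-θ)) / (1 - q1)) := by
      rw [hG1def]
      refine dyadic_bound σ sN hmeasN cN
        (fun k => ENNReal.ofReal (K1 * (2*(ϱ * (2:ℝ)^(-(k:ℝ))))^d)) ?_ _ q1
        hq1pos.le hq1lt (by positivity) ?_
      · intro k
        refine le_trans (measure_mono ?_) (hUBΓ x hx (2*(ϱ * (2:ℝ)^(-(k:ℝ)))) (by positivity))
        refine diff_subset.trans (closedBall_subset_ball ?_)
        have := hrpos (-(k:ℝ)); linarith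
      · intro k
        rw [← ENNReal.ofReal_mul (hcNpos k)]
        refine ENNReal.ofReal_le_ofReal (le_of_eq ?_)
        simp only [hcNdef, hq1def]
        have e1 : (2:ℝ)*(ϱ * (2:ℝ)^(-(k:ℝ))) = ϱ * (2:ℝ)^(1-(k:ℝ)) := by
          rw [Real.rpow_sub h2pos, Real.rpow_one, Real.rpow_neg h2pos.le]; ring
        rw [e1, ← Real.rpow_natCast ((2:ℝ)^(θ-1)) k, ← Real.rpow_mul h2pos.le]
        rw [Real.mul_rpow hϱ.le (Real.rpow_pos_of_pos h2pos _).le,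
            Real.mul_rpow hϱ.le (Real.rpow_pos_of_pos h2pos _).le,
            ← Real.rpow_mul h2pos.le, ← Real.rpow_mul h2pos.le]
        rw [div_eq_mul_inv, mul_inv, ← Real.rpow_neg hϱ.le, ← Real.rpow_neg h2pos.le]
        calc ϱ ^ (-(d / 2) - 1) * (ϱ * 2 ^ (-(k:ℝ))) * (ϱ ^ (-(d + θ)) * 2 ^ (-((-(k:ℝ) - 1) * (d + θ)))) *
            (K1 * (ϱ ^ d * 2 ^ ((1 - (k:ℝ)) * d)))
            = K1 * (ϱ ^ (-(d / 2) - 1) * ϱ ^ (1:ℝ) * ϱ ^ (-(d + θ)) * ϱ ^ d) *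
              ((2:ℝ) ^ (-(k:ℝ)) * 2 ^ (-((-(k:ℝ) - 1) * (d + θ))) * 2 ^ ((1 - (k:ℝ)) * d)) := by
              rw [Real.rpow_one]; ring
          _ = K1 * ϱ ^ (-(d / 2) - 1 + 1 + -(d + θ) + d) *
              (2:ℝ) ^ (-(k:ℝ) + -((-(k:ℝ) - 1) * (d + θ)) + (1 - (k:ℝ)) * d) := by
              rw [← Real.rpow_add hϱ, ← Real.rpow_add hϱ, ← Real.rpow_add hϱ,
                  ← Real.rpow_add h2pos, ← Real.rpow_add h2pos]
          _ = K1 * (2:ℝ)^(2*d+θ) * ϱ^(-(d/2)-θ) * (2:ℝ) ^ ((θ-1) * (k:ℝ)) := by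
              rw [show -(d / 2) - 1 + 1 + -(d + θ) + d = -(d/2) - θ by ring,
                  show -(k:ℝ) + -((-(k:ℝ) - 1) * (d + θ)) + (1 - (k:ℝ)) * d
                    = (2*d+θ) + (θ-1)*(k:ℝ) by ring,
                  Real.rpow_add h2pos]
              ring
    have hIG2 : ∫⁻ y, G2 y ∂σ
        ≤ ENNReal.ofReal ((2 * K1 * (2:ℝ)^d * ϱ^(-(d/2)-θ)) / (1 - q2)) := by
      rw [hG2def]
      refine dyadic_bound σ sF hmeasF cF
        (fun k => ENNReal.ofReal (K1 * (ϱ * (2:ℝ)^((k:ℝ)+1))^d)) ?_ _ q2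
        hq2pos.le hq2lt (by positivity) ?_
      · intro k
        refine le_trans (measure_mono diff_subset) (hUBΓ x hx (ϱ * (2:ℝ)^((k:ℝ)+1)) (hrpos _))
      · intro k
        rw [← ENNReal.ofReal_mul (hcFpos k)]
        refine ENNReal.ofReal_le_ofReal (le_of_eq ?_)
        simp only [hcFdef, hq2def]
        rw [← Real.rpow_natCast ((2:ℝ)^(-θ)) k, ← Real.rpow_mul h2pos.le]
        rw [Real.mul_rpow hϱ.le (Real.rpow_pos_of_pos h2pos _).le,
            Real.mul_rpow hϱ.le (Real.rpow_pos_of_pos h2pos _).le,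
            ← Real.rpow_mul h2pos.le, ← Real.rpow_mul h2pos.le]
        rw [div_eq_mul_inv, mul_inv, ← Real.rpow_neg hϱ.le, ← Real.rpow_neg h2pos.le]
        calc 2 * ϱ ^ (-(d/2)) * (ϱ ^ (-(d + θ)) * 2 ^ (-((k:ℝ) * (d + θ)))) *
            (K1 * (ϱ ^ d * 2 ^ (((k:ℝ) + 1) * d)))
            = 2 * K1 * (ϱ ^ (-(d/2)) * ϱ ^ (-(d + θ)) * ϱ ^ d) *
              ((2:ℝ) ^ (-((k:ℝ) * (d + θ))) * 2 ^ (((k:ℝ) + 1) * d)) := by ring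
          _ = 2 * K1 * ϱ ^ (-(d/2) + -(d + θ) + d) *
              (2:ℝ) ^ (-((k:ℝ) * (d + θ)) + ((k:ℝ) + 1) * d) := by
              rw [← Real.rpow_add hϱ, ← Real.rpow_add hϱ, ← Real.rpow_add h2pos]
          _ = 2 * K1 * (2:ℝ)^d * ϱ^(-(d/2)-θ) * (2:ℝ) ^ (-θ * (k:ℝ)) := by
              rw [show -(d/2) + -(d + θ) + d = -(d/2) - θ by ring,
                  show -((k:ℝ) * (d + θ)) + ((k:ℝ) + 1) * d = d + (-θ) * (k:ℝ) by ring,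
                  Real.rpow_add h2pos]
              ring
    calc ∫⁻ y, ENNReal.ofReal (|a x - a y| / dist x y ^ (d + θ)) ∂σ
        ≤ ∫⁻ y, (G1 y + G2 y) ∂σ := hstep1
      _ = (∫⁻ y, G1 y ∂σ) + ∫⁻ y, G2 y ∂σ := hsplit
      _ ≤ ENNReal.ofReal ((K1 * (2:ℝ)^(2*d+θ) * ϱ^(-(d/2)-θ)) / (1 - q1))
          + ENNReal.ofReal ((2 * K1 * (2:ℝ)^d * ϱ^(-(d/2)-θ)) / (1 - q2)) :=
          add_le_add hIG1 hIG2
      _ = ENNReal.ofReal (C1 * ϱ ^ (-(d/2) - θ)) := by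
          have h1q1 : (0:ℝ) < 1 - q1 := by linarith
          have h1q2 : (0:ℝ) < 1 - q2 := by linarith
          rw [← ENNReal.ofReal_add (by positivity) (by positivity)]
          simp only [hC1def]
          congr 1
          field_simp
  -- REFINED INNER ESTIMATE for far x
  have key_ref : ∀ x ∈ Γ, 2*ϱ ≤ dist x z →
      ∫⁻ y, ENNReal.ofReal (|a x - a y| / dist x y ^ (d + θ)) ∂σ
        ≤ ENNReal.ofReal (K1 * ϱ^(d/2) / (dist x z / 2)^(d+θ)) := by
    intro x hx hfar
    have hdxz : 0 < dist x z := by linarith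
    have hax : a x = 0 := by
      refine ha1 x ?_
      rintro ⟨-, hxb⟩
      rw [mem_ball] at hxb
      linarith
    have hstep : ∀ y ∈ Γ, ENNReal.ofReal (|a x - a y| / dist x y ^ (d + θ))
        ≤ (ball z ϱ).indicator (fun _ => ENNReal.ofReal (ϱ^(-(d/2)) / (dist x z/2)^(d+θ))) y := by
      intro y hy
      by_cases hyb : y ∈ ball z ϱ
      · rw [indicator_of_mem hyb]
        refine ENNReal.ofReal_le_ofReal (div_le_div₀ ?_ ?_ ?_ ?_)
        · exact (Real.rpow_pos_of_pos hϱ _).le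
        · rw [hax, zero_sub, abs_neg]
          exact ha2 y hy
        · exact Real.rpow_pos_of_pos (by linarith) _
        · refine Real.rpow_le_rpow (by linarith) ?_ hdθ.le
          have h5 : dist y z < ϱ := mem_ball.1 hyb
          have h6 := dist_triangle x y z
          linarith
      · rw [indicator_of_notMem hyb]
        have hay : a y = 0 := ha1 y (by rintro ⟨-, h⟩; exact hyb h)
        rw [hzero x y (by rw [hax, hay])]
    calc ∫⁻ y, ENNReal.ofReal (|a x - a y| / dist x y ^ (d + θ)) ∂σ
        ≤ ∫⁻ y, (ball z ϱ).indicator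
            (fun _ => ENNReal.ofReal (ϱ^(-(d/2)) / (dist x z/2)^(d+θ))) y ∂σ := by
          refine lintegral_mono_ae ?_
          rw [hσres]
          filter_upwards [ae_restrict_mem hΓm] with y hy using hstep y hy
      _ = ENNReal.ofReal (ϱ^(-(d/2)) / (dist x z/2)^(d+θ)) * σ (ball z ϱ) :=
          lintegral_indicator_const measurableSet_ball _
      _ ≤ ENNReal.ofReal (ϱ^(-(d/2)) / (dist x z/2)^(d+θ)) * ENNReal.ofReal (K1 * ϱ^d) :=
          mul_le_mul_right (hUBΓ z hz ϱ hϱ) _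
      _ = ENNReal.ofReal (K1 * ϱ^(d/2) / (dist x z / 2)^(d+θ)) := by
          rw [← ENNReal.ofReal_mul (by positivity)]
          congr 1
          have hXpos : (0:ℝ) < (dist x z/2)^(d+θ) := Real.rpow_pos_of_pos (by linarith) _
          have hmerge : ϱ^(-(d/2)) * ϱ^d = ϱ^(d/2) := by
            rw [← Real.rpow_add hϱ]
            congr 1
            ring
          rw [div_mul_eq_mul_div]
          congr 1
          calc ϱ ^ (-(d / 2)) * (K1 * ϱ ^ d) = K1 * (ϱ^(-(d/2)) * ϱ^d) := by ring
            _ = K1 * ϱ^(d/2) := by rw [hmerge]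
  -- OUTER ESTIMATE
  set sO : ℕ → Set (Eucl n) := fun k =>
    ball z (ϱ * (2:ℝ)^((k:ℝ)+2)) \ ball z (ϱ * (2:ℝ)^((k:ℝ)+1)) with hsOdef
  set cO : ℕ → ℝ := fun k => K1 * ϱ^(d/2) / (ϱ * (2:ℝ)^((k:ℝ)))^(d+θ) with hcOdef
  have hcOpos : ∀ k, 0 ≤ cO k := fun k => by
    simp only [hcOdef]
    have := hrpos ((k:ℝ)); positivity
  have hmeasO : ∀ k, MeasurableSet (sO k) :=
    fun k => measurableSet_ball.diff measurableSet_ball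
  set H1 : Eucl n → ℝ≥0∞ := fun x =>
    (ball z (2*ϱ)).indicator (fun _ => ENNReal.ofReal (C1 * ϱ ^ (-(d/2) - θ))) x with hH1def
  set H2 : Eucl n → ℝ≥0∞ := fun x =>
    ∑' k, (sO k).indicator (fun _ => ENNReal.ofReal (cO k)) x with hH2def
  have hdomO : ∀ x ∈ Γ,
      (∫⁻ y, ENNReal.ofReal (|a x - a y| / dist x y ^ (d + θ)) ∂σ) ≤ H1 x + H2 x := by
    intro x hx
    by_cases hxb : x ∈ ball z (2*ϱ)
    · refine le_trans (key_inner x hx) (le_trans ?_ le_self_add)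
      simp only [hH1def]
      rw [indicator_of_mem hxb]
    · have h2ϱ : 2*ϱ ≤ dist x z := not_lt.1 (fun h => hxb (mem_ball.2 h))
      obtain ⟨k, hk1, hk2⟩ := dyadic_cover (by linarith : (0:ℝ) < 2*ϱ) h2ϱ
      have hge : ϱ * (2:ℝ)^((k:ℝ)+1) ≤ dist x z := by rw [hconv5]; linarith
      have hlt : dist x z < ϱ * (2:ℝ)^((k:ℝ)+2) := by rw [hconv6]; linarith
      have hmem : x ∈ sO k := by
        constructor
        · rw [mem_ball]; exact hlt
        · rw [mem_ball]; exact not_lt.2 hge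
      refine le_trans (key_ref x hx h2ϱ) (le_trans ?_ le_add_self)
      have hval : ENNReal.ofReal (K1 * ϱ^(d/2) / (dist x z / 2)^(d+θ))
          ≤ ENNReal.ofReal (cO k) := by
        refine ENNReal.ofReal_le_ofReal ?_
        simp only [hcOdef]
        refine div_le_div₀ (by positivity) le_rfl (Real.rpow_pos_of_pos (hrpos _) _) ?_
        refine Real.rpow_le_rpow (hrpos _).le ?_ hdθ.le
        have h7 : ϱ * (2:ℝ)^((k:ℝ)) * 2 = ϱ * (2:ℝ)^((k:ℝ)+1) := by
          rw [Real.rpow_add h2pos, Real.rpow_one]; ring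
        nlinarith [hge]
      refine le_trans hval ?_
      rw [hH2def]
      exact le_trans
        (le_of_eq (indicator_of_mem hmem (fun _ => ENNReal.ofReal (cO k))).symm)
        (ENNReal.le_tsum k)
  have hH1meas : Measurable H1 := measurable_const.indicator measurableSet_ball
  have hIH1 : ∫⁻ x, H1 x ∂σ ≤ ENNReal.ofReal (C1 * K1 * (2:ℝ)^d * ϱ^(d/2-θ)) := by
    rw [hH1def]
    calc ∫⁻ x, (ball z (2*ϱ)).indicator
          (fun _ => ENNReal.ofReal (C1 * ϱ ^ (-(d/2) - θ))) x ∂σ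
        = ENNReal.ofReal (C1 * ϱ ^ (-(d/2) - θ)) * σ (ball z (2*ϱ)) :=
          lintegral_indicator_const measurableSet_ball _
      _ ≤ ENNReal.ofReal (C1 * ϱ ^ (-(d/2) - θ)) * ENNReal.ofReal (K1 * (2*ϱ)^d) :=
          mul_le_mul_right (hUBΓ z hz (2*ϱ) (by linarith)) _
      _ = ENNReal.ofReal (C1 * K1 * (2:ℝ)^d * ϱ^(d/2-θ)) := by
          rw [← ENNReal.ofReal_mul (by positivity)]
          congr 1
          rw [Real.mul_rpow h2pos.le hϱ.le]
          calc C1 * ϱ ^ (-(d/2) - θ) * (K1 * ((2:ℝ)^d * ϱ^d))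
              = C1 * K1 * (2:ℝ)^d * (ϱ ^ (-(d/2) - θ) * ϱ^d) := by ring
            _ = C1 * K1 * (2:ℝ)^d * ϱ^(d/2-θ) := by
                rw [← Real.rpow_add hϱ, show -(d/2) - θ + d = d/2 - θ by ring]
  have hIH2 : ∫⁻ x, H2 x ∂σ
      ≤ ENNReal.ofReal ((K1^2 * (2:ℝ)^(2*d) * ϱ^(d/2-θ)) / (1 - q2)) := by
    rw [hH2def]
    refine dyadic_bound σ sO hmeasO cO
      (fun k => ENNReal.ofReal (K1 * (ϱ * (2:ℝ)^((k:ℝ)+2))^d)) ?_ _ q2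
      hq2pos.le hq2lt (by positivity) ?_
    · intro k
      refine le_trans (measure_mono diff_subset) (hUBΓ z hz (ϱ * (2:ℝ)^((k:ℝ)+2)) (hrpos _))
    · intro k
      rw [← ENNReal.ofReal_mul (hcOpos k)]
      refine ENNReal.ofReal_le_ofReal (le_of_eq ?_)
      simp only [hcOdef, hq2def]
      rw [← Real.rpow_natCast ((2:ℝ)^(-θ)) k, ← Real.rpow_mul h2pos.le]
      rw [Real.mul_rpow hϱ.le (Real.rpow_pos_of_pos h2pos _).le,
          Real.mul_rpow hϱ.le (Real.rpow_pos_of_pos h2pos _).le,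
          ← Real.rpow_mul h2pos.le, ← Real.rpow_mul h2pos.le]
      rw [div_eq_mul_inv, mul_inv, ← Real.rpow_neg hϱ.le, ← Real.rpow_neg h2pos.le]
      calc K1 * ϱ ^ (d/2) * (ϱ ^ (-(d + θ)) * 2 ^ (-((k:ℝ) * (d + θ)))) *
          (K1 * (ϱ ^ d * 2 ^ (((k:ℝ) + 2) * d)))
          = K1^2 * (ϱ ^ (d/2) * ϱ ^ (-(d + θ)) * ϱ ^ d) *
            ((2:ℝ) ^ (-((k:ℝ) * (d + θ))) * 2 ^ (((k:ℝ) + 2) * d)) := by ring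
        _ = K1^2 * ϱ ^ (d/2 + -(d + θ) + d) *
            (2:ℝ) ^ (-((k:ℝ) * (d + θ)) + ((k:ℝ) + 2) * d) := by
            rw [← Real.rpow_add hϱ, ← Real.rpow_add hϱ, ← Real.rpow_add h2pos]
        _ = K1^2 * (2:ℝ)^(2*d) * ϱ^(d/2-θ) * (2:ℝ) ^ (-θ * (k:ℝ)) := by
            rw [show d/2 + -(d + θ) + d = d/2 - θ by ring,
                show -((k:ℝ) * (d + θ)) + ((k:ℝ) + 2) * d = 2*d + (-θ) * (k:ℝ) by ring,
                Real.rpow_add h2pos]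
            ring
  calc ∫⁻ x, ∫⁻ y, ENNReal.ofReal (|a x - a y| / dist x y ^ (d + θ)) ∂σ ∂σ
      ≤ ∫⁻ x, (H1 x + H2 x) ∂σ := by
        refine lintegral_mono_ae ?_
        rw [hσres]
        filter_upwards [ae_restrict_mem hΓm] with x hx using hdomO x hx
    _ = (∫⁻ x, H1 x ∂σ) + ∫⁻ x, H2 x ∂σ := lintegral_add_left hH1meas H2
    _ ≤ ENNReal.ofReal (C1 * K1 * (2:ℝ)^d * ϱ^(d/2-θ))
        + ENNReal.ofReal ((K1^2 * (2:ℝ)^(2*d) * ϱ^(d/2-θ)) / (1 - q2)) :=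
        add_le_add hIH1 hIH2
    _ = ENNReal.ofReal (Cf * ϱ ^ (d/2 - θ)) := by
        have h1q2 : (0:ℝ) < 1 - q2 := by linarith
        rw [← ENNReal.ofReal_add (by positivity) (by positivity)]
        simp only [hCfdef]
        congr 1
        field_simp

end
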